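/- Spectral monotonicity for simple random walk: setting f_n(x) = p_n(x₀,x) + p_{n+1}(x₀,x) where p_n is the heat kernel (p_n(x,y) = P^x(X_n = y)/μ_y), the Dirichlet energy satisfies E(f_n, f_n) = f_{2n}(x₀) − f_{2n+2}(x₀), and consequently E(f_n,f_n) ≤ (2/n) f_{2⌊n/2⌋}(x₀). -/

import Mathlib

open scoped ENNReal

attribute [local instance] Classical.propDecidable

variable {V : Type*}

/-- Degree of a vertex. -/
noncomputable def vdeg (G : SimpleGraph V) (x : V) : ℕ := (G.neighborSet x).ncard

/-- One-step transition probability of the simple random walk: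
`P^x(X_1 = y) = 1/μ_x` for `y ∼ x`, and `0` otherwise. -/
noncomputable def stepP (G : SimpleGraph V) (x y : V) : ℝ :=
  (G.neighborSet x).indicator (fun _ => ((vdeg G x : ℝ))⁻¹) y

/-- `walkP G n x y = P^x(X_n = y)`, the `n`-step transition probability. -/
noncomputable def walkP (G : SimpleGraph V) : ℕ → V → V → ℝ
  | 0, x, y => if x = y then 1 else 0
  | n + 1, x, y => ∑' z : V, stepP G x z * walkP G n z y

/-- The heat kernel `p_n(x,y) = P^x(X_n = y)/μ_y`. -/
noncomputable def hkP (G : SimpleGraph V) (n : ℕ) (x y : V) : ℝ :=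
  walkP G n x y / (vdeg G y : ℝ)

/-- `killedP G B n x y = P^x(X_n = y, n < τ_B)`, the transition probability of the walk
killed upon exiting `B` (the path stays in `B` up to and including time `n`). -/
noncomputable def killedP (G : SimpleGraph V) (B : Set V) : ℕ → V → V → ℝ
  | 0, x, y => if x = y ∧ x ∈ B then 1 else 0
  | n + 1, x, y => ∑' z : V, B.indicator (fun w => stepP G w z) x * killedP G B n z y

/-- `exitTail G B x n = P^x(τ_B > n)`, the tail of the exit time of `B`. -/
noncomputable def exitTail (G : SimpleGraph V) (B : Set V) (x : V) (n : ℕ) : ℝ :=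
  ∑' y : V, killedP G B n x y

/-- `meanExit G B x = E^x τ_B`, the mean exit time of `B`. -/
noncomputable def meanExit (G : SimpleGraph V) (B : Set V) (x : V) : ℝ :=
  ∑' n : ℕ, exitTail G B x n

/-- `firstHitP G B y n x = P^x(T_y = n, n < τ_B)`: the probability that the walk started
at `x` first hits `y` at time `n`, before exiting `B`. -/
noncomputable def firstHitP (G : SimpleGraph V) (B : Set V) (y : V) : ℕ → V → ℝ
  | 0, x => if x = y ∧ x ∈ B then 1 else 0
  | n + 1, x => ∑' z : V, (B \ {y}).indicator (fun w => stepP G w z) x * firstHitP G B y n z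

/-- The Green kernel of the walk killed on exiting `B`:
`g_B(x,y) = μ_y⁻¹ ∑_{k≥0} P^x(X_k = y, k < τ_B)`. -/
noncomputable def greenB (G : SimpleGraph V) (B : Set V) (x y : V) : ℝ :=
  (∑' n : ℕ, killedP G B n x y) / (vdeg G y : ℝ)

/-- The real-valued Dirichlet energy `E(f,f) = (1/2) ∑_{x∼y} (f x - f y)²`. -/
noncomputable def rEnergy (G : SimpleGraph V) (f : V → ℝ) : ℝ :=
  2⁻¹ * ∑' e : {p : V × V // G.Adj p.1 p.2}, (f e.val.1 - f e.val.2) ^ 2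

section aux
set_option linter.unusedSectionVars false

variable (G : SimpleGraph V)

lemma stepP_eq_zero {x y : V} (h : ¬ G.Adj x y) : stepP G x y = 0 :=
  Set.indicator_of_notMem (by simpa [SimpleGraph.mem_neighborSet] using h) _

lemma stepP_of_adj {x y : V} (h : G.Adj x y) : stepP G x y = ((vdeg G x : ℝ))⁻¹ :=
  Set.indicator_of_mem h _

lemma stepP_nonneg (x y : V) : 0 ≤ stepP G x y := by
  by_cases h : G.Adj x y
  · rw [stepP_of_adj G h]; positivity
  · rw [stepP_eq_zero G h]

variable (hlf : ∀ v : V, (G.neighborSet v).Finite)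
include hlf

lemma walkP_succ_sum (n : ℕ) (x y : V) :
    walkP G (n+1) x y = ∑ z ∈ (hlf x).toFinset, stepP G x z * walkP G n z y := by
  show (∑' z : V, stepP G x z * walkP G n z y) = _
  refine tsum_eq_sum ?_
  intro z hz
  rw [stepP_eq_zero G (by simpa using hz), zero_mul]

lemma walkP_nonneg (n : ℕ) (x y : V) : 0 ≤ walkP G n x y := by
  induction n generalizing x with
  | zero =>
      show (0:ℝ) ≤ if x = y then 1 else 0
      split <;> norm_num
  | succ n ih =>
      rw [walkP_succ_sum G hlf]
      exact Finset.sum_nonneg fun z _ => mul_nonneg (stepP_nonneg G x z) (ih z)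

lemma walkP_support_finite (n : ℕ) (x : V) :
    (Function.support (fun y => walkP G n x y)).Finite := by
  induction n generalizing x with
  | zero =>
      apply Set.Finite.subset (Set.finite_singleton x)
      intro y hy
      simp only [Function.mem_support] at hy
      rw [Set.mem_singleton_iff]
      by_contra h
      exact hy (by show (if x = y then (1:ℝ) else 0) = 0; rw [if_neg (fun h' => h h'.symm)])
  | succ n ih =>
      apply Set.Finite.subset (Set.Finite.biUnion (hlf x) (fun z _ => ih z))
      intro y hy
      simp only [Function.mem_support] at hy
      by_contra h
      apply hy
      rw [walkP_succ_sum G hlf]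
      refine Finset.sum_eq_zero fun z hz => ?_
      have hz' : z ∈ G.neighborSet x := by simpa using hz
      have : walkP G n z y = 0 := by
        by_contra h2
        exact h (Set.mem_biUnion hz' (by simpa [Function.mem_support] using h2))
      rw [this, mul_zero]

lemma walkP_chapman (m n : ℕ) (x y : V) (s : Finset V)
    (hs : ∀ z, walkP G m x z ≠ 0 → z ∈ s) :
    walkP G (m+n) x y = ∑ z ∈ s, walkP G m x z * walkP G n z y := by
  induction m generalizing x s with
  | zero =>
      rw [Nat.zero_add]
      rw [Finset.sum_eq_single_of_mem x (hs x (by show (if x = x then (1:ℝ) else 0) ≠ 0; simp))]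
      · show walkP G n x y = (if x = x then (1:ℝ) else 0) * walkP G n x y
        simp
      · intro b _ hbx
        show (if x = b then (1:ℝ) else 0) * walkP G n b y = 0
        rw [if_neg (fun h => hbx h.symm), zero_mul]
  | succ m ih =>
      have step1 : walkP G (m+1+n) x y
          = ∑ w ∈ (hlf x).toFinset, stepP G x w * walkP G (m+n) w y := by
        rw [show m+1+n = (m+n)+1 by ring, walkP_succ_sum G hlf]
      set t : Finset V :=
        ((hlf x).toFinset.biUnion fun w => (walkP_support_finite G hlf m w).toFinset) ∪ s with htdef
      have step2 : ∀ w ∈ (hlf x).toFinset, stepP G x w * walkP G (m+n) w y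
          = ∑ z ∈ t, stepP G x w * (walkP G m w z * walkP G n z y) := by
        intro w hw
        rw [ih w t (fun z hz => Finset.mem_union.2 (Or.inl (Finset.mem_biUnion.2
          ⟨w, hw, (walkP_support_finite G hlf m w).mem_toFinset.2 hz⟩))), Finset.mul_sum]
      rw [step1, Finset.sum_congr rfl step2, Finset.sum_comm]
      have step3 : ∀ z ∈ t, ∑ w ∈ (hlf x).toFinset, stepP G x w * (walkP G m w z * walkP G n z y)
          = walkP G (m+1) x z * walkP G n z y := by
        intro z _
        rw [walkP_succ_sum G hlf m x z, Finset.sum_mul]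
        exact Finset.sum_congr rfl fun w _ => (mul_assoc _ _ _).symm
      rw [Finset.sum_congr rfl step3]
      refine (Finset.sum_subset Finset.subset_union_right ?_).symm
      intro z _ hzs
      rw [Classical.byContradiction (fun h : ¬ walkP G (m+1) x z = 0 => hzs (hs z h)), zero_mul]

lemma walkP_one (x y : V) : walkP G 1 x y = stepP G x y := by
  have h : ∀ z ∈ (hlf x).toFinset, stepP G x z * walkP G 0 z y
      = if z = y then stepP G x z else 0 := by
    intro z _
    show stepP G x z * (if z = y then (1:ℝ) else 0) = _
    by_cases h : z = y <;> simp [h]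
  rw [walkP_succ_sum G hlf, Finset.sum_congr rfl h, Finset.sum_ite_eq']
  by_cases h : y ∈ (hlf x).toFinset
  · rw [if_pos h]
  · rw [if_neg h]
    exact (stepP_eq_zero G (by simpa using h)).symm

variable (hd : ∀ v : V, (vdeg G v : ℝ) ≠ 0)
include hd

lemma walkP_rev (n : ℕ) (x y : V) :
    (vdeg G x : ℝ) * walkP G n x y = (vdeg G y : ℝ) * walkP G n y x := by
  induction n generalizing x y with
  | zero =>
      by_cases h : x = y
      · subst h; rfl
      · rw [show walkP G 0 x y = 0 from by
            show (if x = y then (1:ℝ) else 0) = 0; rw [if_neg h],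
          show walkP G 0 y x = 0 from by
            show (if y = x then (1:ℝ) else 0) = 0; rw [if_neg (fun h' => h h'.symm)],
          mul_zero, mul_zero]
  | succ n ih =>
      set s : Finset V := (hlf x).toFinset ∪ (walkP_support_finite G hlf n y).toFinset with hsdef
      have hrhs : (vdeg G y : ℝ) * walkP G (n+1) y x
          = ∑ z ∈ s, (vdeg G y : ℝ) * (walkP G n y z * stepP G z x) := by
        rw [walkP_chapman G hlf n 1 y x s (fun z hz => Finset.mem_union.2
          (Or.inr ((walkP_support_finite G hlf n y).mem_toFinset.2 hz))), Finset.mul_sum]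
        exact Finset.sum_congr rfl fun z _ => by rw [walkP_one G hlf]
      have hlhs : (vdeg G x : ℝ) * walkP G (n+1) x y
          = ∑ z ∈ s, (vdeg G x : ℝ) * (stepP G x z * walkP G n z y) := by
        rw [walkP_succ_sum G hlf, Finset.mul_sum]
        refine Finset.sum_subset Finset.subset_union_left ?_
        intro z _ hz
        rw [stepP_eq_zero G (by simpa using hz), zero_mul, mul_zero]
      rw [hlhs, hrhs]
      refine Finset.sum_congr rfl fun z _ => ?_
      by_cases hadj : G.Adj x z
      · have h1 : (vdeg G x : ℝ) * stepP G x z = 1 := by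
          rw [stepP_of_adj G hadj, mul_inv_cancel₀ (hd x)]
        rw [← mul_assoc, h1, one_mul, stepP_of_adj G hadj.symm]
        have hdz := hd z
        field_simp
        linarith [ih z y]
      · rw [stepP_eq_zero G hadj, stepP_eq_zero G (fun h => hadj h.symm)]
        ring

lemma hkP_symm (n : ℕ) (x y : V) : hkP G n x y = hkP G n y x := by
  unfold hkP
  rw [div_eq_div_iff (hd y) (hd x)]
  linarith [walkP_rev G hlf hd n x y]

lemma inner_eq (a b : ℕ) (x₀ : V) (t : Finset V)
    (ht : ∀ z, walkP G a x₀ z ≠ 0 → z ∈ t) :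
    ∑ x ∈ t, (vdeg G x : ℝ) * (hkP G a x₀ x * hkP G b x₀ x) = hkP G (a+b) x₀ x₀ := by
  have h1 : ∀ x ∈ t, (vdeg G x : ℝ) * (hkP G a x₀ x * hkP G b x₀ x)
      = walkP G a x₀ x * walkP G b x x₀ / (vdeg G x₀ : ℝ) := by
    intro x _
    have h2 : walkP G b x₀ x * (vdeg G x₀ : ℝ) = walkP G b x x₀ * (vdeg G x : ℝ) := by
      linarith [walkP_rev G hlf hd b x₀ x]
    unfold hkP
    have hdx := hd x
    have hd0 := hd x₀
    field_simp
    linear_combination (walkP G a x₀ x) * h2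
  rw [Finset.sum_congr rfl h1, ← Finset.sum_div,
    ← walkP_chapman G hlf a b x₀ x₀ t ht]
  rfl

lemma sum_nbhd_q (k : ℕ) (x₀ x : V) :
    ∑ y ∈ (hlf x).toFinset, hkP G k x₀ y = (vdeg G x : ℝ) * hkP G (k+1) x₀ x := by
  have h1 : ∀ y ∈ (hlf x).toFinset, hkP G k x₀ y
      = walkP G k y x₀ / (vdeg G x₀ : ℝ) := by
    intro y _
    unfold hkP
    rw [div_eq_div_iff (hd y) (hd x₀)]
    linarith [walkP_rev G hlf hd k x₀ y]
  have h2 : walkP G (k+1) x x₀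
      = ((vdeg G x : ℝ))⁻¹ * ∑ y ∈ (hlf x).toFinset, walkP G k y x₀ := by
    rw [walkP_succ_sum G hlf, Finset.mul_sum]
    exact Finset.sum_congr rfl fun y hy => by rw [stepP_of_adj G (by simpa using hy)]
  have h3 : ∑ y ∈ (hlf x).toFinset, walkP G k y x₀
      = (vdeg G x : ℝ) * walkP G (k+1) x x₀ := by
    rw [h2, ← mul_assoc, mul_inv_cancel₀ (hd x), one_mul]
  rw [Finset.sum_congr rfl h1, ← Finset.sum_div, h3, hkP_symm G hlf hd (k+1) x₀ x]
  unfold hkP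
  rw [mul_div_assoc]

lemma rEnergy_eq_sum (f : V → ℝ) (t : Finset V)
    (h1 : ∀ x, f x ≠ 0 → x ∈ t) (h2 : ∀ x y, f x ≠ 0 → G.Adj x y → y ∈ t) :
    rEnergy G f = 2⁻¹ * ∑ p ∈ (t ×ˢ t).filter (fun p => G.Adj p.1 p.2), (f p.1 - f p.2)^2 := by
  unfold rEnergy
  congr 1
  rw [tsum_eq_sum (s := (t ×ˢ t).subtype (fun p => G.Adj p.1 p.2)) ?_]
  · exact Finset.sum_subtype_eq_sum_filter (fun q : V × V => (f q.1 - f q.2)^2) (p := fun q => G.Adj q.1 q.2)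
  · intro e he
    rw [Finset.mem_subtype] at he
    have hf1 : f e.val.1 = 0 := by
      by_contra h
      exact he (Finset.mem_product.2 ⟨h1 _ h, h2 _ _ h e.prop⟩)
    have hf2 : f e.val.2 = 0 := by
      by_contra h
      exact he (Finset.mem_product.2 ⟨h2 _ _ h e.prop.symm, h1 _ h⟩)
    rw [hf1, hf2, sub_zero]
    norm_num

lemma sumA_sq (f : V → ℝ) (t : Finset V)
    (h2 : ∀ x y, f x ≠ 0 → G.Adj x y → y ∈ t) :
    ∑ p ∈ (t ×ˢ t).filter (fun p => G.Adj p.1 p.2), f p.1 ^ 2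
      = ∑ x ∈ t, (vdeg G x : ℝ) * f x ^ 2 := by
  rw [Finset.sum_filter, Finset.sum_product]
  refine Finset.sum_congr rfl fun x _ => ?_
  have hbeta : ∀ y, (if G.Adj x y then f (x, y).1 ^ 2 else 0) = (if G.Adj x y then f x ^ 2 else 0) :=
    fun y => rfl
  rw [Finset.sum_congr rfl fun y _ => hbeta y]
  by_cases hf : f x = 0
  · simp [hf]
  · have hfil : t.filter (fun y => G.Adj x y) = (hlf x).toFinset := by
      ext y
      simp only [Finset.mem_filter, Set.Finite.mem_toFinset, SimpleGraph.mem_neighborSet]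
      exact ⟨fun h => h.2, fun h => ⟨h2 x y hf h, h⟩⟩
    rw [← Finset.sum_filter, hfil, Finset.sum_const, nsmul_eq_mul]
    congr 1
    show ((hlf x).toFinset.card : ℝ) = ((vdeg G x : ℕ) : ℝ)
    norm_cast
    exact (Set.ncard_eq_toFinset_card _ (hlf x)).symm

lemma sumA_swap (F : V → V → ℝ) (t : Finset V) :
    ∑ p ∈ (t ×ˢ t).filter (fun p => G.Adj p.1 p.2), F p.1 p.2
      = ∑ p ∈ (t ×ˢ t).filter (fun p => G.Adj p.1 p.2), F p.2 p.1 := by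
  refine Finset.sum_nbij' (fun p => Prod.swap p) (fun p => Prod.swap p) ?_ ?_ ?_ ?_ ?_
  · intro p hp
    simp only [Finset.mem_filter, Finset.mem_product] at hp ⊢
    exact ⟨⟨hp.1.2, hp.1.1⟩, hp.2.symm⟩
  · intro p hp
    simp only [Finset.mem_filter, Finset.mem_product] at hp ⊢
    exact ⟨⟨hp.1.2, hp.1.1⟩, hp.2.symm⟩
  · intro p _; rfl
  · intro p _; rfl
  · intro p _; rfl

lemma sumA_cross (f g : V → ℝ) (t : Finset V)
    (hg : ∀ y, g y ≠ 0 → y ∈ t) :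
    ∑ p ∈ (t ×ˢ t).filter (fun p => G.Adj p.1 p.2), f p.1 * g p.2
      = ∑ x ∈ t, f x * ∑ y ∈ (hlf x).toFinset, g y := by
  rw [Finset.sum_filter, Finset.sum_product]
  refine Finset.sum_congr rfl fun x _ => ?_
  have h1 : ∑ y ∈ t, (if G.Adj x y then f x * g y else 0)
      = ∑ y ∈ t.filter (fun y => G.Adj x y), f x * g y := (Finset.sum_filter _ _).symm
  rw [h1, ← Finset.mul_sum]
  congr 1
  refine Finset.sum_subset ?_ ?_
  · intro y hy
    simp only [Finset.mem_filter] at hy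
    simpa using hy.2
  · intro y hy hyn
    have hadj : G.Adj x y := by simpa using hy
    have hyt : y ∉ t := fun h => hyn (Finset.mem_filter.2 ⟨h, hadj⟩)
    exact Classical.byContradiction fun h => hyt (hg y h)

end aux

section key
set_option linter.unusedSectionVars false
variable (G : SimpleGraph V) (hlf : ∀ v : V, (G.neighborSet v).Finite)
  (hd : ∀ v : V, (vdeg G v : ℝ) ≠ 0)

lemma rEnergy_nonneg (f : V → ℝ) : 0 ≤ rEnergy G f :=
  mul_nonneg (by norm_num) (tsum_nonneg fun e => sq_nonneg _)

include hlf

lemma hkP_nonneg (n : ℕ) (x y : V) : 0 ≤ hkP G n x y :=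
  div_nonneg (walkP_nonneg G hlf n x y) (Nat.cast_nonneg _)

include hd

lemma keyA (x₀ : V) (k : ℕ) :
    rEnergy G (fun x => hkP G k x₀ x + hkP G (k+1) x₀ x)
      = (hkP G (2*k) x₀ x₀ + hkP G (2*k+1) x₀ x₀)
        - (hkP G (2*k+2) x₀ x₀ + hkP G (2*k+3) x₀ x₀) := by
  classical
  set f : V → ℝ := fun x => hkP G k x₀ x + hkP G (k+1) x₀ x with hf
  set s : Finset V := (walkP_support_finite G hlf k x₀).toFinset ∪
    (walkP_support_finite G hlf (k+1) x₀).toFinset with hsdef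
  set t : Finset V := s ∪ s.biUnion (fun v => (hlf v).toFinset) with htdef
  have hsub : s ⊆ t := Finset.subset_union_left
  have hsupp : ∀ x, f x ≠ 0 → x ∈ s := by
    intro x hx
    by_contra hxs
    apply hx
    have e1 : walkP G k x₀ x = 0 := by
      by_contra h
      exact hxs (Finset.mem_union.2 (Or.inl ((walkP_support_finite G hlf k x₀).mem_toFinset.2 h)))
    have e2 : walkP G (k+1) x₀ x = 0 := by
      by_contra h
      exact hxs (Finset.mem_union.2 (Or.inr ((walkP_support_finite G hlf (k+1) x₀).mem_toFinset.2 h)))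
    show hkP G k x₀ x + hkP G (k+1) x₀ x = 0
    unfold hkP
    rw [e1, e2]
    simp
  have h1 : ∀ x, f x ≠ 0 → x ∈ t := fun x hx => hsub (hsupp x hx)
  have h2 : ∀ x y, f x ≠ 0 → G.Adj x y → y ∈ t := fun x y hx hadj =>
    Finset.mem_union.2 (Or.inr (Finset.mem_biUnion.2 ⟨x, hsupp x hx, (hlf x).mem_toFinset.2 hadj⟩))
  have htk : ∀ z, walkP G k x₀ z ≠ 0 → z ∈ t := fun z hz =>
    hsub (Finset.mem_union.2 (Or.inl ((walkP_support_finite G hlf k x₀).mem_toFinset.2 hz)))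
  have htk1 : ∀ z, walkP G (k+1) x₀ z ≠ 0 → z ∈ t := fun z hz =>
    hsub (Finset.mem_union.2 (Or.inr ((walkP_support_finite G hlf (k+1) x₀).mem_toFinset.2 hz)))
  rw [rEnergy_eq_sum G hlf hd f t h1 h2]
  set A := (t ×ˢ t).filter (fun p => G.Adj p.1 p.2) with hA
  have expand : ∑ p ∈ A, (f p.1 - f p.2)^2
      = ∑ p ∈ A, f p.1^2 + ∑ p ∈ A, f p.2^2 - 2 * ∑ p ∈ A, f p.1 * f p.2 := by
    rw [Finset.mul_sum, ← Finset.sum_add_distrib, ← Finset.sum_sub_distrib]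
    exact Finset.sum_congr rfl fun p _ => by ring
  have hsq1 : ∑ p ∈ A, f p.1^2 = ∑ x ∈ t, (vdeg G x : ℝ) * f x ^2 := sumA_sq G hlf hd f t h2
  have hsq2 : ∑ p ∈ A, f p.2^2 = ∑ p ∈ A, f p.1^2 := by
    simpa using (sumA_swap G hlf hd (fun a _ => f a ^ 2) t).symm
  have hq : ∀ x : V, (∑ y ∈ (hlf x).toFinset, f y)
      = (vdeg G x : ℝ) * hkP G (k+1) x₀ x + (vdeg G x : ℝ) * hkP G (k+2) x₀ x := by
    intro x
    show (∑ y ∈ (hlf x).toFinset, (hkP G k x₀ y + hkP G (k+1) x₀ y)) = _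
    rw [Finset.sum_add_distrib, sum_nbhd_q G hlf hd k x₀ x, sum_nbhd_q G hlf hd (k+1) x₀ x]
  have hcross : ∑ p ∈ A, f p.1 * f p.2
      = ∑ x ∈ t, (vdeg G x : ℝ) * (f x * (hkP G (k+1) x₀ x + hkP G (k+2) x₀ x)) := by
    rw [sumA_cross G hlf hd f f t h1]
    refine Finset.sum_congr rfl fun x _ => ?_
    rw [hq x]; ring
  have hSd : ∑ x ∈ t, (vdeg G x : ℝ) * f x^2
      = (∑ x ∈ t, (vdeg G x : ℝ) * (hkP G k x₀ x * hkP G k x₀ x))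
        + 2 * (∑ x ∈ t, (vdeg G x : ℝ) * (hkP G k x₀ x * hkP G (k+1) x₀ x))
        + (∑ x ∈ t, (vdeg G x : ℝ) * (hkP G (k+1) x₀ x * hkP G (k+1) x₀ x)) := by
    rw [Finset.mul_sum, ← Finset.sum_add_distrib, ← Finset.sum_add_distrib]
    refine Finset.sum_congr rfl fun x _ => ?_
    simp only [hf]
    ring
  have hSx : ∑ x ∈ t, (vdeg G x : ℝ) * (f x * (hkP G (k+1) x₀ x + hkP G (k+2) x₀ x))
      = (∑ x ∈ t, (vdeg G x : ℝ) * (hkP G k x₀ x * hkP G (k+1) x₀ x))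
        + (∑ x ∈ t, (vdeg G x : ℝ) * (hkP G k x₀ x * hkP G (k+2) x₀ x))
        + (∑ x ∈ t, (vdeg G x : ℝ) * (hkP G (k+1) x₀ x * hkP G (k+1) x₀ x))
        + (∑ x ∈ t, (vdeg G x : ℝ) * (hkP G (k+1) x₀ x * hkP G (k+2) x₀ x)) := by
    rw [← Finset.sum_add_distrib, ← Finset.sum_add_distrib, ← Finset.sum_add_distrib]
    refine Finset.sum_congr rfl fun x _ => ?_
    simp only [hf]
    ring
  have Ikk := inner_eq G hlf hd k k x₀ t htk
  have Ikk1 := inner_eq G hlf hd k (k+1) x₀ t htk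
  have Ikk2 := inner_eq G hlf hd k (k+2) x₀ t htk
  have Ik1k1 := inner_eq G hlf hd (k+1) (k+1) x₀ t htk1
  have Ik1k2 := inner_eq G hlf hd (k+1) (k+2) x₀ t htk1
  rw [show k+k = 2*k from by ring] at Ikk
  rw [show k+(k+1) = 2*k+1 from by ring] at Ikk1
  rw [show k+(k+2) = 2*k+2 from by ring] at Ikk2
  rw [show (k+1)+(k+1) = 2*k+2 from by ring] at Ik1k1
  rw [show (k+1)+(k+2) = 2*k+3 from by ring] at Ik1k2
  rw [expand, hsq2, hsq1, hcross, hSd, hSx, Ikk, Ikk1, Ikk2, Ik1k1, Ik1k2]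
  ring

lemma keyB (x₀ : V) (k : ℕ) :
    (hkP G (2*k+2) x₀ x₀ + hkP G (2*k+3) x₀ x₀)
        - (hkP G (2*k+4) x₀ x₀ + hkP G (2*k+5) x₀ x₀)
      ≤ (hkP G (2*k) x₀ x₀ + hkP G (2*k+1) x₀ x₀)
        - (hkP G (2*k+2) x₀ x₀ + hkP G (2*k+3) x₀ x₀) := by
  classical
  set g : V → ℝ := fun x => hkP G k x₀ x - hkP G (k+2) x₀ x with hg
  set s : Finset V := (walkP_support_finite G hlf k x₀).toFinset ∪
    (walkP_support_finite G hlf (k+2) x₀).toFinset with hsdef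
  set t : Finset V := s ∪ s.biUnion (fun v => (hlf v).toFinset) with htdef
  have hsub : s ⊆ t := Finset.subset_union_left
  have hsupp : ∀ x, g x ≠ 0 → x ∈ s := by
    intro x hx
    by_contra hxs
    apply hx
    have e1 : walkP G k x₀ x = 0 := by
      by_contra h
      exact hxs (Finset.mem_union.2 (Or.inl ((walkP_support_finite G hlf k x₀).mem_toFinset.2 h)))
    have e2 : walkP G (k+2) x₀ x = 0 := by
      by_contra h
      exact hxs (Finset.mem_union.2 (Or.inr ((walkP_support_finite G hlf (k+2) x₀).mem_toFinset.2 h)))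
    show hkP G k x₀ x - hkP G (k+2) x₀ x = 0
    unfold hkP
    rw [e1, e2]
    simp
  have h1 : ∀ x, g x ≠ 0 → x ∈ t := fun x hx => hsub (hsupp x hx)
  have h2 : ∀ x y, g x ≠ 0 → G.Adj x y → y ∈ t := fun x y hx hadj =>
    Finset.mem_union.2 (Or.inr (Finset.mem_biUnion.2 ⟨x, hsupp x hx, (hlf x).mem_toFinset.2 hadj⟩))
  have htk : ∀ z, walkP G k x₀ z ≠ 0 → z ∈ t := fun z hz =>
    hsub (Finset.mem_union.2 (Or.inl ((walkP_support_finite G hlf k x₀).mem_toFinset.2 hz)))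
  have htk2 : ∀ z, walkP G (k+2) x₀ z ≠ 0 → z ∈ t := fun z hz =>
    hsub (Finset.mem_union.2 (Or.inr ((walkP_support_finite G hlf (k+2) x₀).mem_toFinset.2 hz)))
  set A := (t ×ˢ t).filter (fun p => G.Adj p.1 p.2) with hA
  have key : (0:ℝ) ≤ ∑ p ∈ A, (g p.1 + g p.2)^2 := Finset.sum_nonneg fun p _ => sq_nonneg _
  have expand : ∑ p ∈ A, (g p.1 + g p.2)^2
      = ∑ p ∈ A, g p.1^2 + ∑ p ∈ A, g p.2^2 + 2 * ∑ p ∈ A, g p.1 * g p.2 := by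
    rw [Finset.mul_sum, ← Finset.sum_add_distrib, ← Finset.sum_add_distrib]
    exact Finset.sum_congr rfl fun p _ => by ring
  have hsq1 : ∑ p ∈ A, g p.1^2 = ∑ x ∈ t, (vdeg G x : ℝ) * g x ^2 := sumA_sq G hlf hd g t h2
  have hsq2 : ∑ p ∈ A, g p.2^2 = ∑ p ∈ A, g p.1^2 := by
    simpa using (sumA_swap G hlf hd (fun a _ => g a ^ 2) t).symm
  have hq : ∀ x : V, (∑ y ∈ (hlf x).toFinset, g y)
      = (vdeg G x : ℝ) * hkP G (k+1) x₀ x - (vdeg G x : ℝ) * hkP G (k+3) x₀ x := by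
    intro x
    show (∑ y ∈ (hlf x).toFinset, (hkP G k x₀ y - hkP G (k+2) x₀ y)) = _
    rw [Finset.sum_sub_distrib, sum_nbhd_q G hlf hd k x₀ x, sum_nbhd_q G hlf hd (k+2) x₀ x]
  have hcross : ∑ p ∈ A, g p.1 * g p.2
      = ∑ x ∈ t, (vdeg G x : ℝ) * (g x * (hkP G (k+1) x₀ x - hkP G (k+3) x₀ x)) := by
    rw [sumA_cross G hlf hd g g t h1]
    refine Finset.sum_congr rfl fun x _ => ?_
    rw [hq x]; ring
  have hSd : ∑ x ∈ t, (vdeg G x : ℝ) * g x^2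
      = (∑ x ∈ t, (vdeg G x : ℝ) * (hkP G k x₀ x * hkP G k x₀ x))
        - 2 * (∑ x ∈ t, (vdeg G x : ℝ) * (hkP G k x₀ x * hkP G (k+2) x₀ x))
        + (∑ x ∈ t, (vdeg G x : ℝ) * (hkP G (k+2) x₀ x * hkP G (k+2) x₀ x)) := by
    rw [Finset.mul_sum, ← Finset.sum_sub_distrib, ← Finset.sum_add_distrib]
    refine Finset.sum_congr rfl fun x _ => ?_
    simp only [hg]
    ring
  have hSx : ∑ x ∈ t, (vdeg G x : ℝ) * (g x * (hkP G (k+1) x₀ x - hkP G (k+3) x₀ x))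
      = (∑ x ∈ t, (vdeg G x : ℝ) * (hkP G k x₀ x * hkP G (k+1) x₀ x))
        - (∑ x ∈ t, (vdeg G x : ℝ) * (hkP G k x₀ x * hkP G (k+3) x₀ x))
        - (∑ x ∈ t, (vdeg G x : ℝ) * (hkP G (k+2) x₀ x * hkP G (k+1) x₀ x))
        + (∑ x ∈ t, (vdeg G x : ℝ) * (hkP G (k+2) x₀ x * hkP G (k+3) x₀ x)) := by
    rw [← Finset.sum_sub_distrib, ← Finset.sum_sub_distrib, ← Finset.sum_add_distrib]
    refine Finset.sum_congr rfl fun x _ => ?_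
    simp only [hg]
    ring
  have Ikk := inner_eq G hlf hd k k x₀ t htk
  have Ikk1 := inner_eq G hlf hd k (k+1) x₀ t htk
  have Ikk2 := inner_eq G hlf hd k (k+2) x₀ t htk
  have Ikk3 := inner_eq G hlf hd k (k+3) x₀ t htk
  have Ik2k1 := inner_eq G hlf hd (k+2) (k+1) x₀ t htk2
  have Ik2k2 := inner_eq G hlf hd (k+2) (k+2) x₀ t htk2
  have Ik2k3 := inner_eq G hlf hd (k+2) (k+3) x₀ t htk2
  rw [show k+k = 2*k from by ring] at Ikk
  rw [show k+(k+1) = 2*k+1 from by ring] at Ikk1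
  rw [show k+(k+2) = 2*k+2 from by ring] at Ikk2
  rw [show k+(k+3) = 2*k+3 from by ring] at Ikk3
  rw [show (k+2)+(k+1) = 2*k+3 from by ring] at Ik2k1
  rw [show (k+2)+(k+2) = 2*k+4 from by ring] at Ik2k2
  rw [show (k+2)+(k+3) = 2*k+5 from by ring] at Ik2k3
  rw [expand, hsq2, hsq1, hcross, hSd, hSx, Ikk, Ikk1, Ikk2, Ikk3, Ik2k1, Ik2k2, Ik2k3] at key
  linarith

end key

/-- with `f_n(x) = p_n(x₀,x) + p_{n+1}(x₀,x)`, the Dirichlet energy satisfies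
`E(f_n,f_n) = f_{2n}(x₀) − f_{2n+2}(x₀)`, and consequently
`E(f_n,f_n) ≤ (2/n) f_{2⌊n/2⌋}(x₀)`. -/
theorem energy_heat_kernel (G : SimpleGraph V) [Infinite V]
    (hconn : G.Connected) (hlf : ∀ v : V, (G.neighborSet v).Finite)
    (x₀ : V) (n : ℕ) (hn : 1 ≤ n) :
    rEnergy G (fun x => hkP G n x₀ x + hkP G (n + 1) x₀ x)
        = (hkP G (2 * n) x₀ x₀ + hkP G (2 * n + 1) x₀ x₀)
          - (hkP G (2 * n + 2) x₀ x₀ + hkP G (2 * n + 3) x₀ x₀) ∧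
    rEnergy G (fun x => hkP G n x₀ x + hkP G (n + 1) x₀ x)
        ≤ (2 / n) * (hkP G (2 * (n / 2)) x₀ x₀ + hkP G (2 * (n / 2) + 1) x₀ x₀) := by
  have hne : ∀ v : V, (G.neighborSet v).Nonempty := by
    intro v
    obtain ⟨w, hw⟩ := exists_ne v
    obtain ⟨p⟩ := hconn.preconnected v w
    cases p with
    | nil => exact absurd rfl hw
    | cons h _ => exact ⟨_, h⟩
  have hd : ∀ v : V, (vdeg G v : ℝ) ≠ 0 := by
    intro v
    have : 0 < vdeg G v := (Set.ncard_pos (hlf v)).2 (hne v)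
    exact Nat.cast_ne_zero.2 this.ne'
  refine ⟨keyA G hlf hd x₀ n, ?_⟩
  set m := n / 2 with hm
  have hmn : m ≤ n := Nat.div_le_self n 2
  set b : ℕ → ℝ := fun j => hkP G (2*j) x₀ x₀ + hkP G (2*j+1) x₀ x₀ with hb
  have ha_mono : ∀ k, b (k+1) - b (k+1+1) ≤ b k - b (k+1) := by
    intro k
    have h := keyB G hlf hd x₀ k
    simp only [hb]
    rw [show 2*(k+1) = 2*k+2 from by ring, show 2*k+2+1 = 2*k+3 from by ring,
      show 2*(k+1+1) = 2*k+4 from by ring, show 2*k+4+1 = 2*k+5 from by ring]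
    exact h
  have ha0 : ∀ k, (0:ℝ) ≤ b k - b (k+1) := by
    intro k
    have h := keyA G hlf hd x₀ k
    have h2 := rEnergy_nonneg G (fun x => hkP G k x₀ x + hkP G (k+1) x₀ x)
    rw [h] at h2
    simp only [hb]
    rw [show 2*(k+1) = 2*k+2 from by ring, show 2*k+2+1 = 2*k+3 from by ring]
    linarith
  have hb0 : ∀ k, (0:ℝ) ≤ b k := fun k =>
    add_nonneg (hkP_nonneg G hlf _ _ _) (hkP_nonneg G hlf _ _ _)
  have hanti : Antitone (fun k => b k - b (k+1)) := antitone_nat_of_succ_le ha_mono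
  have htel : ∑ i ∈ Finset.Ico m n, (b i - b (i+1)) = b m - b n := by
    rw [Finset.sum_Ico_eq_sub _ hmn, Finset.sum_range_sub' b, Finset.sum_range_sub' b]
    ring
  have hlow : ((n - m : ℕ) : ℝ) * (b n - b (n+1)) ≤ b m - b n := by
    have h := Finset.card_nsmul_le_sum (Finset.Ico m n) (fun i => b i - b (i+1)) (b n - b (n+1))
      (fun i hi => hanti (le_of_lt (Finset.mem_Ico.1 hi).2))
    rw [Nat.card_Ico, nsmul_eq_mul] at h
    exact le_trans h (le_of_eq htel)
  have hEn := keyA G hlf hd x₀ n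
  rw [hEn]
  have hgoal : b n - b (n+1) ≤ 2 / (n:ℝ) * b m := by
    have hn0 : (0:ℝ) < n := by exact_mod_cast hn
    rw [div_mul_eq_mul_div, le_div_iff₀ hn0]
    have h2nm : (n:ℝ) ≤ 2 * ((n - m : ℕ) : ℝ) := by
      have h' : n ≤ 2 * (n - m) := by omega
      exact_mod_cast h'
    have han := ha0 n
    have hmul := mul_le_mul_of_nonneg_left h2nm han
    nlinarith [hlow, hb0 n, hmul]
  simp only [hb] at hgoal
  rw [show 2*(n+1) = 2*n+2 from by ring, show 2*n+2+1 = 2*n+3 from by ring] at hgoal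
  exact hgoal
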